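/- arXiv:1611.04510 — 8 statements merged into one kernel-verified Lean document; each statement's English description precedes it below -/
import Mathlib

section
/- Suppose Δt ≤ δ, the sequences w, y, b, d satisfy the discrete scheme, and β ≥ 0 is a real number such that ⟨b_n, χ⟩ ≤ β‖g_V χ‖ for all χ ∈ V. Then the one-step energy inequality holds: ‖w_{n+1}‖² − ‖w_n‖² + (1/3)‖w_{n+1} − w_n‖² + ν·Δt·‖g_V w_{n+1}‖² + (1/4)·δ·Δt·‖g_Q y_{n+1}‖² ≤ (Δt/ν)·β² + 4·δ·Δt·‖g_Q d_n‖². (This is the explicit-constant one-step estimate (56) in the proof of Lemma 3.) -/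
open RealInnerProductSpace

/-- Abstract one-step energy estimate, stated for plain vectors. -/
theorem one_step_energy_aux {E F : Type*} [NormedAddCommGroup E] [InnerProductSpace ℝ E]
    [NormedAddCommGroup F] [InnerProductSpace ℝ F]
    (wp wn u v D : E) (g : F) (ν δ Δt β B : ℝ)
    (hν : 0 < ν) (hδ : 0 < δ) (hΔt : 0 < Δt) (hΔtδ : Δt ≤ δ) (hβ : 0 ≤ β)
    (h1 : (1 / Δt) * ⟪wp - wn, wp⟫ + ν * ⟪g, g⟫ + ⟪v, wp⟫ = B + ⟪D, wp⟫)
    (hB : B ≤ β * ‖g‖)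
    (h2a : ⟪wp, v⟫ = δ * ⟪u, v⟫)
    (h2b : ⟪wp, D⟫ = δ * ⟪u, D⟫)
    (h2c : ⟪wp - wn, u - v⟫ = δ * ⟪u - v, u - v⟫) :
    ‖wp‖ ^ 2 - ‖wn‖ ^ 2 + (1 / 3) * ‖wp - wn‖ ^ 2 + ν * Δt * ‖g‖ ^ 2
      + (1 / 4) * δ * Δt * ‖u‖ ^ 2
    ≤ (Δt / ν) * β ^ 2 + 4 * δ * Δt * ‖D‖ ^ 2 := by
  -- basic identities
  have hA : 2 * ⟪wp - wn, wp⟫ = ‖wp‖ ^ 2 - ‖wn‖ ^ 2 + ‖wp - wn‖ ^ 2 := by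
    rw [inner_sub_left, norm_sub_sq_real, real_inner_self_eq_norm_sq wp,
      real_inner_comm wn wp]
    ring
  have hGG : ⟪g, g⟫ = ‖g‖ ^ 2 := real_inner_self_eq_norm_sq g
  -- rewrite scheme equation
  rw [real_inner_comm wp v, real_inner_comm wp D, h2a, h2b, hGG] at h1
  have hne : Δt ≠ 0 := hΔt.ne'
  have h1' : ⟪wp - wn, wp⟫
      = Δt * B + Δt * δ * ⟪u, D⟫ - Δt * ν * ‖g‖ ^ 2 - Δt * δ * ⟪u, v⟫ := by
    field_simp at h1
    linarith
  -- pressure increment control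
  have hM : δ * ‖u - v‖ ^ 2 ≤ ‖wp - wn‖ * ‖u - v‖ := by
    rw [← real_inner_self_eq_norm_sq (u - v), ← h2c]
    exact real_inner_le_norm _ _
  have hM2 : δ ^ 2 * ‖u - v‖ ^ 2 ≤ ‖wp - wn‖ ^ 2 := by
    have hM' := mul_le_mul_of_nonneg_left hM hδ.le
    linarith [hM', sq_nonneg (‖wp - wn‖ - δ * ‖u - v‖)]
  -- lower bound on ⟪u, v⟫
  have hP : ‖u‖ ^ 2 - ‖u‖ * ‖u - v‖ ≤ ⟪u, v⟫ := by
    have e1 : ⟪u, u - v⟫ = ‖u‖ ^ 2 - ⟪u, v⟫ := by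
      rw [inner_sub_right, real_inner_self_eq_norm_sq]
    have e2 := real_inner_le_norm u (u - v)
    linarith
  have hR : ⟪u, D⟫ ≤ ‖u‖ * ‖D‖ := real_inner_le_norm u D
  -- Young-type inequalities
  have hI : 2 * Δt * (β * ‖g‖) ≤ Δt / ν * β ^ 2 + Δt * ν * ‖g‖ ^ 2 := by
    have h := mul_nonneg (div_nonneg hΔt.le hν.le) (sq_nonneg (β - ν * ‖g‖))
    have e1 : Δt / ν * (β - ν * ‖g‖) ^ 2
        = Δt / ν * β ^ 2 - 2 * Δt * (β * ‖g‖) + Δt * ν * ‖g‖ ^ 2 := by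
      field_simp
      ring
    rw [e1] at h
    linarith
  have hII : 2 * Δt * δ * (‖u‖ * ‖D‖)
      ≤ (1 / 4) * Δt * δ * ‖u‖ ^ 2 + 4 * Δt * δ * ‖D‖ ^ 2 := by
    linarith [mul_nonneg (mul_nonneg hΔt.le hδ.le) (sq_nonneg (‖u‖ / 2 - 2 * ‖D‖))]
  have hIII : 2 * Δt * δ * (‖u‖ * ‖u - v‖)
      ≤ (3 / 2) * Δt * δ * ‖u‖ ^ 2 + (2 / 3) * ‖wp - wn‖ ^ 2 := by
    linarith [mul_nonneg (mul_nonneg hΔt.le hδ.le) (sq_nonneg (3 * ‖u‖ - 2 * ‖u - v‖)),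
      mul_nonneg (mul_nonneg (sub_nonneg.2 hΔtδ) hδ.le) (sq_nonneg ‖u - v‖), hM2]
  -- multiplied versions of the basic bounds
  have c1 : (0:ℝ) ≤ 2 * Δt := by positivity
  have c2 : (0:ℝ) ≤ 2 * Δt * δ := by positivity
  have hVI : 2 * Δt * B ≤ 2 * Δt * (β * ‖g‖) := by
    linarith [mul_le_mul_of_nonneg_left hB c1]
  have hV : 2 * Δt * δ * ⟪u, D⟫ ≤ 2 * Δt * δ * (‖u‖ * ‖D‖) := by
    linarith [mul_le_mul_of_nonneg_left hR c2]
  have hIV : -(2 * Δt * δ * ⟪u, v⟫)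
      ≤ -(2 * Δt * δ * ‖u‖ ^ 2) + 2 * Δt * δ * (‖u‖ * ‖u - v‖) := by
    linarith [mul_le_mul_of_nonneg_left hP c2]
  linarith [hA, h1', hI, hII, hIII, hVI, hV, hIV]

/-- One-step energy inequality (56) in the proof of Lemma 3. -/
theorem one_step_energy_inequality
    {E F : Type*} [NormedAddCommGroup E] [InnerProductSpace ℝ E] [CompleteSpace E]
    [NormedAddCommGroup F] [InnerProductSpace ℝ F] [CompleteSpace F]
    (V : Submodule ℝ E) {Q : Type*} [AddCommGroup Q] [Module ℝ Q]
    (gV : V →ₗ[ℝ] F) (gQ : Q →ₗ[ℝ] E)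
    (ν δ Δt : ℝ) (hν : 0 < ν) (hδ : 0 < δ) (hΔt : 0 < Δt) (hΔtδ : Δt ≤ δ)
    (w : ℕ → V) (y : ℕ → Q) (b : ℕ → E) (d : ℕ → Q)
    (hscheme1 : ∀ n, ∀ χ : V,
      (1 / Δt) * ⟪(w (n + 1) : E) - (w n : E), (χ : E)⟫
        + ν * ⟪gV (w (n + 1)), gV χ⟫ + ⟪gQ (y n), (χ : E)⟫
      = ⟪b n, (χ : E)⟫ + ⟪gQ (d n), (χ : E)⟫)
    (hscheme2 : ∀ n, ∀ ψ : Q, ⟪(w n : E), gQ ψ⟫ = δ * ⟪gQ (y n), gQ ψ⟫)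
    (n : ℕ) (β : ℝ) (hβ : 0 ≤ β)
    (hb : ∀ χ : V, ⟪b n, (χ : E)⟫ ≤ β * ‖gV χ‖) :
    ‖(w (n + 1) : E)‖ ^ 2 - ‖(w n : E)‖ ^ 2
      + (1 / 3) * ‖(w (n + 1) : E) - (w n : E)‖ ^ 2
      + ν * Δt * ‖gV (w (n + 1))‖ ^ 2
      + (1 / 4) * δ * Δt * ‖gQ (y (n + 1))‖ ^ 2
    ≤ (Δt / ν) * β ^ 2 + 4 * δ * Δt * ‖gQ (d n)‖ ^ 2 := by
  have h2c : ⟪(w (n + 1) : E) - (w n : E), gQ (y (n + 1)) - gQ (y n)⟫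
      = δ * ⟪gQ (y (n + 1)) - gQ (y n), gQ (y (n + 1)) - gQ (y n)⟫ := by
    have ha := hscheme2 (n + 1) (y (n + 1) - y n)
    have hb2 := hscheme2 n (y (n + 1) - y n)
    rw [map_sub] at ha hb2
    rw [inner_sub_left, ha, hb2, inner_sub_left]
    ring
  exact one_step_energy_aux (w (n + 1) : E) (w n : E) (gQ (y (n + 1))) (gQ (y n))
    (gQ (d n)) (gV (w (n + 1))) ν δ Δt β (⟪b n, (w (n + 1) : E)⟫)
    hν hδ hΔt hΔtδ hβ (hscheme1 n (w (n + 1))) (hb (w (n + 1)))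
    (hscheme2 (n + 1) (y n)) (hscheme2 (n + 1) (d n)) h2c
end

section
/- Suppose Δt ≤ δ, the sequences w, y, b, d satisfy the discrete scheme, and β : ℕ → ℝ satisfies ⟨b_n, χ⟩ ≤ β_n‖g_V χ‖ for every n and every χ ∈ V. Then for all natural numbers n₀ < n: ‖w_n‖² + (1/3)·Σ_{j=n₀}^{n−1} ‖w_{j+1} − w_j‖² + Δt·Σ_{j=n₀}^{n−1} ( ν‖g_V w_{j+1}‖² + (1/4)·δ‖g_Q y_{j+1}‖² ) ≤ ‖w_{n₀}‖² + Δt·Σ_{j=n₀}^{n−1} ( (1/ν)·β_j² + 4·δ·‖g_Q d_j‖² ). (This is the explicit-constant form of the stability estimate (48) of Lemma 3, where β_j plays the role of the negative-norm ‖b_h^j‖_{−1}.) -/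
open RealInnerProductSpace

set_option maxHeartbeats 1000000 in
/-- Stability estimate (48) of Lemma 3 with explicit constants. -/
theorem stability_estimate_l2
    {E F : Type*} [NormedAddCommGroup E] [InnerProductSpace ℝ E] [CompleteSpace E]
    [NormedAddCommGroup F] [InnerProductSpace ℝ F] [CompleteSpace F]
    (V : Submodule ℝ E) {Q : Type*} [AddCommGroup Q] [Module ℝ Q]
    (gV : V →ₗ[ℝ] F) (gQ : Q →ₗ[ℝ] E)
    (ν δ Δt : ℝ) (hν : 0 < ν) (hδ : 0 < δ) (hΔt : 0 < Δt) (hΔtδ : Δt ≤ δ)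
    (w : ℕ → V) (y : ℕ → Q) (b : ℕ → E) (d : ℕ → Q)
    (hscheme1 : ∀ n, ∀ χ : V,
      (1 / Δt) * ⟪(w (n + 1) : E) - (w n : E), (χ : E)⟫
        + ν * ⟪gV (w (n + 1)), gV χ⟫ + ⟪gQ (y n), (χ : E)⟫
      = ⟪b n, (χ : E)⟫ + ⟪gQ (d n), (χ : E)⟫)
    (hscheme2 : ∀ n, ∀ ψ : Q, ⟪(w n : E), gQ ψ⟫ = δ * ⟪gQ (y n), gQ ψ⟫)
    (β : ℕ → ℝ)
    (hb : ∀ n, ∀ χ : V, ⟪b n, (χ : E)⟫ ≤ β n * ‖gV χ‖)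
    (n₀ n : ℕ) (hn : n₀ < n) :
    ‖(w n : E)‖ ^ 2
      + (1 / 3) * ∑ j ∈ Finset.Ico n₀ n, ‖(w (j + 1) : E) - (w j : E)‖ ^ 2
      + Δt * ∑ j ∈ Finset.Ico n₀ n,
          (ν * ‖gV (w (j + 1))‖ ^ 2 + (1 / 4) * δ * ‖gQ (y (j + 1))‖ ^ 2)
    ≤ ‖(w n₀ : E)‖ ^ 2
      + Δt * ∑ j ∈ Finset.Ico n₀ n,
          ((1 / ν) * β j ^ 2 + 4 * δ * ‖gQ (d j)‖ ^ 2) := by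
  -- Per-step estimate
  have key : ∀ j : ℕ,
      ‖(w (j + 1) : E)‖ ^ 2 + (1 / 3) * ‖(w (j + 1) : E) - (w j : E)‖ ^ 2
        + Δt * (ν * ‖gV (w (j + 1))‖ ^ 2 + (1 / 4) * δ * ‖gQ (y (j + 1))‖ ^ 2)
      ≤ ‖(w j : E)‖ ^ 2 + Δt * ((1 / ν) * β j ^ 2 + 4 * δ * ‖gQ (d j)‖ ^ 2) := by
    intro j
    have h1 := hscheme1 j (w (j + 1))
    -- the time-derivative term
    have e1 : ⟪(w (j + 1) : E) - (w j : E), ((w (j + 1) : V) : E)⟫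
        = (‖(w (j + 1) : E)‖ ^ 2 - ‖(w j : E)‖ ^ 2
            + ‖(w (j + 1) : E) - (w j : E)‖ ^ 2) / 2 := by
      have hns := norm_sub_sq_real ((w (j + 1) : E)) ((w j : E))
      have h2 := real_inner_self_eq_norm_sq ((w (j + 1) : E))
      have h3 := real_inner_comm ((w (j + 1) : E)) ((w j : E))
      rw [inner_sub_left]
      linarith [h2, hns, h3]
    -- viscous term
    have e2 : ⟪gV (w (j + 1)), gV (w (j + 1))⟫ = ‖gV (w (j + 1))‖ ^ 2 :=
      real_inner_self_eq_norm_sq _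
    -- pressure term
    have e3 : ⟪gQ (y j), ((w (j + 1) : V) : E)⟫
        = δ * ‖gQ (y (j + 1))‖ ^ 2
          - ⟪(w (j + 1) : E) - (w j : E), gQ (y (j + 1))⟫ := by
      have a1 := hscheme2 (j + 1) (y j)
      have a2 := hscheme2 (j + 1) (y (j + 1))
      have a3 := hscheme2 j (y (j + 1))
      have c1 := real_inner_comm ((w (j + 1) : E)) (gQ (y j))
      have c2 := real_inner_comm (gQ (y (j + 1))) (gQ (y j))
      have hs : ⟪(w (j + 1) : E) - (w j : E), gQ (y (j + 1))⟫
          = ⟪(w (j + 1) : E), gQ (y (j + 1))⟫ - ⟪(w j : E), gQ (y (j + 1))⟫ :=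
        inner_sub_left _ _ _
      have hY := real_inner_self_eq_norm_sq (gQ (y (j + 1)))
      linear_combination c1 + a1 - δ * c2 + hs + a2 - a3 + δ * hY
    -- data pressure term
    have e4 : ⟪gQ (d j), ((w (j + 1) : V) : E)⟫
        = δ * ⟪gQ (y (j + 1)), gQ (d j)⟫ := by
      have a1 := hscheme2 (j + 1) (d j)
      have c1 := real_inner_comm ((w (j + 1) : E)) (gQ (d j))
      linear_combination a1 + c1
    -- multiply scheme equation by Δt
    rw [e1, e2, e3, e4] at h1
    have h1' : (‖(w (j + 1) : E)‖ ^ 2 - ‖(w j : E)‖ ^ 2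
          + ‖(w (j + 1) : E) - (w j : E)‖ ^ 2) / 2
        + Δt * ν * ‖gV (w (j + 1))‖ ^ 2
        + Δt * (δ * ‖gQ (y (j + 1))‖ ^ 2)
        - Δt * ⟪(w (j + 1) : E) - (w j : E), gQ (y (j + 1))⟫
        = Δt * ⟪b j, ((w (j + 1) : V) : E)⟫
          + Δt * (δ * ⟪gQ (y (j + 1)), gQ (d j)⟫) := by
      have hne : Δt ≠ 0 := ne_of_gt hΔt
      field_simp at h1
      linarith [h1]
    -- bounds
    have hb1 : ⟪b j, ((w (j + 1) : V) : E)⟫ ≤ β j * ‖gV (w (j + 1))‖ := hb j (w (j + 1))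
    have young1 : 2 * (β j * ‖gV (w (j + 1))‖)
        ≤ (1 / ν) * β j ^ 2 + ν * ‖gV (w (j + 1))‖ ^ 2 := by
      have hkey : (1 / ν) * β j ^ 2 + ν * ‖gV (w (j + 1))‖ ^ 2
            - 2 * (β j * ‖gV (w (j + 1))‖)
          = (1 / ν) * (β j - ν * ‖gV (w (j + 1))‖) ^ 2 := by
        field_simp
        ring
      linarith [hkey ▸ mul_nonneg (le_of_lt (one_div_pos.mpr hν))
        (sq_nonneg (β j - ν * ‖gV (w (j + 1))‖)), hkey,
        mul_nonneg (le_of_lt (one_div_pos.mpr hν))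
        (sq_nonneg (β j - ν * ‖gV (w (j + 1))‖))]
    have cs1 : ⟪gQ (y (j + 1)), gQ (d j)⟫ ≤ ‖gQ (y (j + 1))‖ * ‖gQ (d j)‖ :=
      real_inner_le_norm _ _
    have young2 : 2 * (‖gQ (y (j + 1))‖ * ‖gQ (d j)‖)
        ≤ (1 / 4) * ‖gQ (y (j + 1))‖ ^ 2 + 4 * ‖gQ (d j)‖ ^ 2 := by
      have hid : (1 / 4) * ‖gQ (y (j + 1))‖ ^ 2 + 4 * ‖gQ (d j)‖ ^ 2
            - 2 * (‖gQ (y (j + 1))‖ * ‖gQ (d j)‖)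
          = (‖gQ (y (j + 1))‖ / 2 - 2 * ‖gQ (d j)‖) ^ 2 := by ring
      linarith [hid, sq_nonneg (‖gQ (y (j + 1))‖ / 2 - 2 * ‖gQ (d j)‖)]
    have cs2 : ⟪(w (j + 1) : E) - (w j : E), gQ (y (j + 1))⟫
        ≤ ‖(w (j + 1) : E) - (w j : E)‖ * ‖gQ (y (j + 1))‖ :=
      real_inner_le_norm _ _
    have young3 : 2 * Δt * (‖(w (j + 1) : E) - (w j : E)‖ * ‖gQ (y (j + 1))‖)
        ≤ (2 / 3) * ‖(w (j + 1) : E) - (w j : E)‖ ^ 2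
          + (3 / 2) * Δt * δ * ‖gQ (y (j + 1))‖ ^ 2 := by
      have h2 : Δt * Δt ≤ Δt * δ := mul_le_mul_of_nonneg_left hΔtδ hΔt.le
      have hid : (2 / 3) * ‖(w (j + 1) : E) - (w j : E)‖ ^ 2
            + (3 / 2) * (Δt * Δt) * ‖gQ (y (j + 1))‖ ^ 2
            - 2 * Δt * (‖(w (j + 1) : E) - (w j : E)‖ * ‖gQ (y (j + 1))‖)
          = (2 / 3) * (‖(w (j + 1) : E) - (w j : E)‖
              - (3 / 2) * Δt * ‖gQ (y (j + 1))‖) ^ 2 := by ring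
      linarith [hid, sq_nonneg (‖(w (j + 1) : E) - (w j : E)‖
          - (3 / 2) * Δt * ‖gQ (y (j + 1))‖),
        mul_le_mul_of_nonneg_right h2 (sq_nonneg ‖gQ (y (j + 1))‖)]
    -- combine
    have m1 : Δt * ⟪b j, ((w (j + 1) : V) : E)⟫ ≤ Δt * (β j * ‖gV (w (j + 1))‖) :=
      mul_le_mul_of_nonneg_left hb1 hΔt.le
    have m2 : Δt * (2 * (β j * ‖gV (w (j + 1))‖))
        ≤ Δt * ((1 / ν) * β j ^ 2 + ν * ‖gV (w (j + 1))‖ ^ 2) :=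
      mul_le_mul_of_nonneg_left young1 hΔt.le
    have m3 : Δt * δ * ⟪gQ (y (j + 1)), gQ (d j)⟫
        ≤ Δt * δ * (‖gQ (y (j + 1))‖ * ‖gQ (d j)‖) :=
      mul_le_mul_of_nonneg_left cs1 (mul_nonneg hΔt.le hδ.le)
    have m4 : Δt * δ * (2 * (‖gQ (y (j + 1))‖ * ‖gQ (d j)‖))
        ≤ Δt * δ * ((1 / 4) * ‖gQ (y (j + 1))‖ ^ 2 + 4 * ‖gQ (d j)‖ ^ 2) :=
      mul_le_mul_of_nonneg_left young2 (mul_nonneg hΔt.le hδ.le)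
    have m5 : 2 * Δt * ⟪(w (j + 1) : E) - (w j : E), gQ (y (j + 1))⟫
        ≤ 2 * Δt * (‖(w (j + 1) : E) - (w j : E)‖ * ‖gQ (y (j + 1))‖) :=
      mul_le_mul_of_nonneg_left cs2 (by linarith)
    linarith [h1', m1, m2, m3, m4, m5, young3]
  -- summation by induction
  induction n, hn using Nat.le_induction with
  | base =>
      simp only [Nat.Ico_succ_singleton, Finset.sum_singleton]
      linarith [key n₀]
  | succ m hm ih =>
      rw [Finset.sum_Ico_succ_top (Nat.le_of_lt hm), Finset.sum_Ico_succ_top (Nat.le_of_lt hm),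
        Finset.sum_Ico_succ_top (Nat.le_of_lt hm)]
      have hk := key m
      have hmul1 : Δt * (∑ j ∈ Finset.Ico n₀ m,
            (ν * ‖gV (w (j + 1))‖ ^ 2 + (1 / 4) * δ * ‖gQ (y (j + 1))‖ ^ 2)
          + (ν * ‖gV (w (m + 1))‖ ^ 2 + (1 / 4) * δ * ‖gQ (y (m + 1))‖ ^ 2))
          = Δt * ∑ j ∈ Finset.Ico n₀ m,
            (ν * ‖gV (w (j + 1))‖ ^ 2 + (1 / 4) * δ * ‖gQ (y (j + 1))‖ ^ 2)
          + Δt * (ν * ‖gV (w (m + 1))‖ ^ 2 + (1 / 4) * δ * ‖gQ (y (m + 1))‖ ^ 2) := by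
        ring
      have hmul2 : Δt * (∑ j ∈ Finset.Ico n₀ m,
            ((1 / ν) * β j ^ 2 + 4 * δ * ‖gQ (d j)‖ ^ 2)
          + ((1 / ν) * β m ^ 2 + 4 * δ * ‖gQ (d m)‖ ^ 2))
          = Δt * ∑ j ∈ Finset.Ico n₀ m,
            ((1 / ν) * β j ^ 2 + 4 * δ * ‖gQ (d j)‖ ^ 2)
          + Δt * ((1 / ν) * β m ^ 2 + 4 * δ * ‖gQ (d m)‖ ^ 2) := by
        ring
      rw [hmul1, hmul2]
      linarith
end

section
/- Suppose Δt ≤ δ and the sequences w, y, b, d satisfy the discrete scheme. Write t_j = j·Δt. Then for all natural numbers n₀ < n: t_n‖w_n‖² + (1/3)·Σ_{j=n₀}^{n−1} t_{j+1}‖w_{j+1} − w_j‖² + Δt·Σ_{j=n₀}^{n−1} t_{j+1} ( 2ν‖g_V w_{j+1}‖² + (1/4)·δ‖g_Q y_{j+1}‖² ) ≤ t_{n₀}‖w_{n₀}‖² + Δt·Σ_{j=n₀}^{n−1} ( ‖w_j‖² + ‖w_{j+1}‖² ) + Δt·Σ_{j=n₀}^{n−1} t_{j+1} ( t_{j+1}‖b_j‖²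 + 4δ‖g_Q d_j‖² ). (This is the explicit-constant form of the time-weighted stability estimate (49) of Lemma 3.) -/
open RealInnerProductSpace

lemma step_aux {E F : Type*} [NormedAddCommGroup E] [InnerProductSpace ℝ E]
    [NormedAddCommGroup F] [InnerProductSpace ℝ F]
    (ν δ Δt t : ℝ) (hν : 0 < ν) (hδ : 0 < δ) (hΔt : 0 < Δt) (hΔtδ : Δt ≤ δ)
    (htpos : 0 < t)
    (w0 w1 bb yy0 yy1 dd : E) (gv1 : F)
    (h1 : (1 / Δt) * ⟪w1 - w0, w1⟫ + ν * ⟪gv1, gv1⟫ + ⟪yy0, w1⟫ = ⟪bb, w1⟫ + ⟪dd, w1⟫)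
    (h2a : ⟪w1, yy0⟫ = δ * ⟪yy1, yy0⟫)
    (h2b : ⟪w1, dd⟫ = δ * ⟪yy1, dd⟫)
    (h2c : ⟪w1 - w0, yy1 - yy0⟫ = δ * ⟪yy1 - yy0, yy1 - yy0⟫) :
    t * ‖w1‖ ^ 2 - (t - Δt) * ‖w0‖ ^ 2 + (1 / 3) * (t * ‖w1 - w0‖ ^ 2)
        + Δt * (t * (2 * ν * ‖gv1‖ ^ 2 + (1 / 4) * δ * ‖yy1‖ ^ 2))
      ≤ Δt * (‖w0‖ ^ 2 + ‖w1‖ ^ 2) + Δt * (t * (t * ‖bb‖ ^ 2 + 4 * δ * ‖dd‖ ^ 2)) := by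
  have hΔt0 : Δt ≠ 0 := ne_of_gt hΔt
  set Z : E := yy1 - yy0 with hZ
  have hid : Δt * (1 / Δt) = 1 := by field_simp
  have hI : ⟪w1 - w0, w1⟫ = (‖w1‖ ^ 2 - ‖w0‖ ^ 2 + ‖w1 - w0‖ ^ 2) / 2 := by
    have h2 : ⟪w1 - w0, w1⟫ = ⟪w1, w1⟫ - ⟪w0, w1⟫ := inner_sub_left _ _ _
    have h3 := norm_sub_sq_real w1 w0
    have h4 : ⟪w1, w1⟫ = ‖w1‖ ^ 2 := real_inner_self_eq_norm_sq _
    have h5 : ⟪w0, w1⟫ = ⟪w1, w0⟫ := real_inner_comm _ _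
    linarith
  have hGr : ⟪gv1, gv1⟫ = ‖gv1‖ ^ 2 := real_inner_self_eq_norm_sq _
  have h2b' : ⟪dd, w1⟫ = δ * ⟪yy1, dd⟫ := by rw [real_inner_comm]; exact h2b
  have hyy : ⟪yy0, w1⟫ = δ * (‖yy1‖ ^ 2 - ⟪yy1, Z⟫) := by
    have h2 : ⟪yy1, Z⟫ = ⟪yy1, yy1⟫ - ⟪yy1, yy0⟫ := by rw [hZ]; exact inner_sub_right _ _ _
    have h4 : ⟪yy1, yy1⟫ = ‖yy1‖ ^ 2 := real_inner_self_eq_norm_sq _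
    rw [real_inner_comm, h2a]
    linear_combination δ * h2 + δ * h4
  have hzz : δ * ‖Z‖ ^ 2 = ⟪w1 - w0, Z⟫ := by
    have h4 : ⟪Z, Z⟫ = ‖Z‖ ^ 2 := real_inner_self_eq_norm_sq _
    linear_combination -h2c - δ * h4
  have cs1 : ⟪yy1, Z⟫ ≤ ‖yy1‖ * ‖Z‖ := real_inner_le_norm _ _
  have cs2 : ⟪bb, w1⟫ ≤ ‖bb‖ * ‖w1‖ := real_inner_le_norm _ _
  have cs3 : ⟪yy1, dd⟫ ≤ ‖yy1‖ * ‖dd‖ := real_inner_le_norm _ _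
  have cs4 : ⟪w1 - w0, Z⟫ ≤ ‖w1 - w0‖ * ‖Z‖ := real_inner_le_norm _ _
  have hZbound : Δt * δ * ‖Z‖ ^ 2 ≤ ‖w1 - w0‖ ^ 2 := by
    have h6 : δ * ‖Z‖ ^ 2 ≤ ‖w1 - w0‖ * ‖Z‖ := by rw [hzz]; exact cs4
    have q1 : δ * (δ * ‖Z‖ ^ 2) ≤ δ * (‖w1 - w0‖ * ‖Z‖) :=
      mul_le_mul_of_nonneg_left h6 hδ.le
    have q2 : (0:ℝ) ≤ (‖w1 - w0‖ - δ * ‖Z‖) ^ 2 := sq_nonneg _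
    have q3 : (0:ℝ) ≤ (δ - Δt) * δ * ‖Z‖ ^ 2 :=
      mul_nonneg (mul_nonneg (sub_nonneg.mpr hΔtδ) hδ.le) (sq_nonneg ‖Z‖)
    linarith
  rw [hI, hGr, hyy, h2b'] at h1
  have hEq : t * ‖w1‖ ^ 2 - t * ‖w0‖ ^ 2 + t * ‖w1 - w0‖ ^ 2 + 2 * t * Δt * ν * ‖gv1‖ ^ 2
        + 2 * t * Δt * δ * ‖yy1‖ ^ 2
      = 2 * t * Δt * ⟪bb, w1⟫ + 2 * t * Δt * (δ * ⟪yy1, dd⟫) + 2 * t * Δt * δ * ⟪yy1, Z⟫ := by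
    linear_combination (2 * t * Δt) * h1
      - (t * (‖w1‖ ^ 2 - ‖w0‖ ^ 2 + ‖w1 - w0‖ ^ 2)) * hid
  have ha : 2 * t * Δt * δ * ⟪yy1, Z⟫
      ≤ (3 / 2) * (t * Δt * δ * ‖yy1‖ ^ 2) + (2 / 3) * (t * ‖w1 - w0‖ ^ 2) := by
    have q1 : 2 * t * Δt * δ * ⟪yy1, Z⟫ ≤ 2 * t * Δt * δ * (‖yy1‖ * ‖Z‖) :=
      mul_le_mul_of_nonneg_left cs1 (by positivity)
    have q2 : (0:ℝ) ≤ t * Δt * δ / 6 * (3 * ‖yy1‖ - 2 * ‖Z‖) ^ 2 :=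
      mul_nonneg (by positivity) (sq_nonneg _)
    have q3 : (2 / 3) * t * (Δt * δ * ‖Z‖ ^ 2) ≤ (2 / 3) * t * ‖w1 - w0‖ ^ 2 :=
      mul_le_mul_of_nonneg_left hZbound (by positivity)
    linarith
  have hb : 2 * t * Δt * ⟪bb, w1⟫ ≤ Δt * (t ^ 2 * ‖bb‖ ^ 2) + Δt * ‖w1‖ ^ 2 := by
    have q1 : 2 * t * Δt * ⟪bb, w1⟫ ≤ 2 * t * Δt * (‖bb‖ * ‖w1‖) :=
      mul_le_mul_of_nonneg_left cs2 (by positivity)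
    have q2 : (0:ℝ) ≤ Δt * (t * ‖bb‖ - ‖w1‖) ^ 2 := mul_nonneg hΔt.le (sq_nonneg _)
    linarith
  have hc : 2 * t * Δt * (δ * ⟪yy1, dd⟫)
      ≤ (1 / 4) * (t * Δt * δ * ‖yy1‖ ^ 2) + 4 * (t * Δt * δ * ‖dd‖ ^ 2) := by
    have q1 : 2 * t * Δt * (δ * ⟪yy1, dd⟫) ≤ 2 * t * Δt * (δ * (‖yy1‖ * ‖dd‖)) := by
      apply mul_le_mul_of_nonneg_left _ (by positivity : (0:ℝ) ≤ 2 * t * Δt)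
      exact mul_le_mul_of_nonneg_left cs3 hδ.le
    have q2 : (0:ℝ) ≤ t * Δt * δ / 4 * (‖yy1‖ - 4 * ‖dd‖) ^ 2 :=
      mul_nonneg (by positivity) (sq_nonneg _)
    linarith
  linarith [hEq, ha, hb, hc]

/-- Time-weighted stability estimate (49) of Lemma 3 with explicit constants. -/
theorem stability_estimate_time_weighted
    {E F : Type*} [NormedAddCommGroup E] [InnerProductSpace ℝ E] [CompleteSpace E]
    [NormedAddCommGroup F] [InnerProductSpace ℝ F] [CompleteSpace F]
    (V : Submodule ℝ E) {Q : Type*} [AddCommGroup Q] [Module ℝ Q]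
    (gV : V →ₗ[ℝ] F) (gQ : Q →ₗ[ℝ] E)
    (ν δ Δt : ℝ) (hν : 0 < ν) (hδ : 0 < δ) (hΔt : 0 < Δt) (hΔtδ : Δt ≤ δ)
    (w : ℕ → V) (y : ℕ → Q) (b : ℕ → E) (d : ℕ → Q)
    (hscheme1 : ∀ n, ∀ χ : V,
      (1 / Δt) * ⟪(w (n + 1) : E) - (w n : E), (χ : E)⟫
        + ν * ⟪gV (w (n + 1)), gV χ⟫ + ⟪gQ (y n), (χ : E)⟫
      = ⟪b n, (χ : E)⟫ + ⟪gQ (d n), (χ : E)⟫)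
    (hscheme2 : ∀ n, ∀ ψ : Q, ⟪(w n : E), gQ ψ⟫ = δ * ⟪gQ (y n), gQ ψ⟫)
    (n₀ n : ℕ) (hn : n₀ < n) :
    ((n : ℝ) * Δt) * ‖(w n : E)‖ ^ 2
      + (1 / 3) * ∑ j ∈ Finset.Ico n₀ n,
          (((j : ℝ) + 1) * Δt) * ‖(w (j + 1) : E) - (w j : E)‖ ^ 2
      + Δt * ∑ j ∈ Finset.Ico n₀ n,
          (((j : ℝ) + 1) * Δt) *
            (2 * ν * ‖gV (w (j + 1))‖ ^ 2 + (1 / 4) * δ * ‖gQ (y (j + 1))‖ ^ 2)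
    ≤ ((n₀ : ℝ) * Δt) * ‖(w n₀ : E)‖ ^ 2
      + Δt * ∑ j ∈ Finset.Ico n₀ n, (‖(w j : E)‖ ^ 2 + ‖(w (j + 1) : E)‖ ^ 2)
      + Δt * ∑ j ∈ Finset.Ico n₀ n,
          (((j : ℝ) + 1) * Δt) *
            ((((j : ℝ) + 1) * Δt) * ‖b j‖ ^ 2 + 4 * δ * ‖gQ (d j)‖ ^ 2) := by
  have key : ∀ j : ℕ,
      (((j : ℝ) + 1) * Δt) * ‖(w (j + 1) : E)‖ ^ 2 - ((j : ℝ) * Δt) * ‖(w j : E)‖ ^ 2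
        + (1 / 3) * ((((j : ℝ) + 1) * Δt) * ‖(w (j + 1) : E) - (w j : E)‖ ^ 2)
        + Δt * ((((j : ℝ) + 1) * Δt) *
            (2 * ν * ‖gV (w (j + 1))‖ ^ 2 + (1 / 4) * δ * ‖gQ (y (j + 1))‖ ^ 2))
      ≤ Δt * (‖(w j : E)‖ ^ 2 + ‖(w (j + 1) : E)‖ ^ 2)
        + Δt * ((((j : ℝ) + 1) * Δt) *
            ((((j : ℝ) + 1) * Δt) * ‖b j‖ ^ 2 + 4 * δ * ‖gQ (d j)‖ ^ 2)) := by
    intro j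
    have h2c : ⟪(w (j + 1) : E) - (w j : E), gQ (y (j + 1)) - gQ (y j)⟫
        = δ * ⟪gQ (y (j + 1)) - gQ (y j), gQ (y (j + 1)) - gQ (y j)⟫ := by
      have a1 := hscheme2 (j + 1) (y (j + 1) - y j)
      have a2 := hscheme2 j (y (j + 1) - y j)
      rw [map_sub] at a1 a2
      rw [inner_sub_left, a1, a2, ← mul_sub, ← inner_sub_left]
    have hstep := step_aux ν δ Δt (((j : ℝ) + 1) * Δt) hν hδ hΔt hΔtδ (by positivity)
      (w j : E) (w (j + 1) : E) (b j) (gQ (y j)) (gQ (y (j + 1))) (gQ (d j))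
      (gV (w (j + 1))) (hscheme1 j (w (j + 1))) (hscheme2 (j + 1) (y j))
      (hscheme2 (j + 1) (d j)) h2c
    have ht : (((j : ℝ) + 1) * Δt - Δt) = (j : ℝ) * Δt := by ring
    rw [ht] at hstep
    exact hstep
  have hsum : ∑ j ∈ Finset.Ico n₀ n,
        ((((j : ℝ) + 1) * Δt) * ‖(w (j + 1) : E)‖ ^ 2 - ((j : ℝ) * Δt) * ‖(w j : E)‖ ^ 2
          + (1 / 3) * ((((j : ℝ) + 1) * Δt) * ‖(w (j + 1) : E) - (w j : E)‖ ^ 2)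
          + Δt * ((((j : ℝ) + 1) * Δt) *
              (2 * ν * ‖gV (w (j + 1))‖ ^ 2 + (1 / 4) * δ * ‖gQ (y (j + 1))‖ ^ 2)))
      ≤ ∑ j ∈ Finset.Ico n₀ n,
        (Δt * (‖(w j : E)‖ ^ 2 + ‖(w (j + 1) : E)‖ ^ 2)
          + Δt * ((((j : ℝ) + 1) * Δt) *
              ((((j : ℝ) + 1) * Δt) * ‖b j‖ ^ 2 + 4 * δ * ‖gQ (d j)‖ ^ 2))) :=
    Finset.sum_le_sum fun j _ => key j
  have tel : ∀ m : ℕ, n₀ ≤ m →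
      ∑ j ∈ Finset.Ico n₀ m,
          ((((j : ℝ) + 1) * Δt) * ‖(w (j + 1) : E)‖ ^ 2
            - ((j : ℝ) * Δt) * ‖(w j : E)‖ ^ 2)
        = ((m : ℝ) * Δt) * ‖(w m : E)‖ ^ 2 - ((n₀ : ℝ) * Δt) * ‖(w n₀ : E)‖ ^ 2 := by
    intro m hm
    induction m with
    | zero =>
      have : n₀ = 0 := Nat.le_zero.mp hm
      subst this; simp
    | succ k ih =>
      rcases Nat.lt_or_ge n₀ (k + 1) with h | h
      · have hk : n₀ ≤ k := Nat.lt_succ_iff.mp h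
        rw [Finset.sum_Ico_succ_top hk, ih hk]
        push_cast
        ring
      · have : n₀ = k + 1 := le_antisymm hm h
        subst this; simp
  simp only [Finset.sum_add_distrib, Finset.sum_sub_distrib] at hsum
  rw [← Finset.mul_sum, ← Finset.mul_sum, ← Finset.mul_sum, ← Finset.mul_sum] at hsum
  have htel := tel n (le_of_lt hn)
  simp only [Finset.sum_sub_distrib] at htel
  linarith [hsum, htel]
end

section
/- Suppose Δt ≤ δ and the sequences w, y, b, d satisfy the discrete scheme. Then for all natural numbers n₀ < n: (1/2)·Δt·Σ_{j=n₀}^{n−1} ‖(w_{j+1} − w_j)/Δt‖² + ν‖g_V w_n‖² + δ‖g_Q y_n‖² + ν·Σ_{j=n₀}^{n−1} ‖g_V(w_{j+1} − w_j)‖² ≤ ν‖g_V w_{n₀}‖² + δ‖g_Q y_{n₀}‖² + 4·Δt·Σ_{j=n₀}^{n−1} ( ‖b_j‖² + ‖g_Q d_j‖² ). (This is the explicit-constant form of the H¹-type stability estimate (50) of Lemma 3.) -/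
set_option maxHeartbeats 1000000


open RealInnerProductSpace

/-- H¹-type stability estimate (50) of Lemma 3 with explicit constants. -/
theorem stability_estimate_h1
    {E F : Type*} [NormedAddCommGroup E] [InnerProductSpace ℝ E] [CompleteSpace E]
    [NormedAddCommGroup F] [InnerProductSpace ℝ F] [CompleteSpace F]
    (V : Submodule ℝ E) {Q : Type*} [AddCommGroup Q] [Module ℝ Q]
    (gV : V →ₗ[ℝ] F) (gQ : Q →ₗ[ℝ] E)
    (ν δ Δt : ℝ) (hν : 0 < ν) (hδ : 0 < δ) (hΔt : 0 < Δt) (hΔtδ : Δt ≤ δ)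
    (w : ℕ → V) (y : ℕ → Q) (b : ℕ → E) (d : ℕ → Q)
    (hscheme1 : ∀ n, ∀ χ : V,
      (1 / Δt) * ⟪(w (n + 1) : E) - (w n : E), (χ : E)⟫
        + ν * ⟪gV (w (n + 1)), gV χ⟫ + ⟪gQ (y n), (χ : E)⟫
      = ⟪b n, (χ : E)⟫ + ⟪gQ (d n), (χ : E)⟫)
    (hscheme2 : ∀ n, ∀ ψ : Q, ⟪(w n : E), gQ ψ⟫ = δ * ⟪gQ (y n), gQ ψ⟫)
    (n₀ n : ℕ) (hn : n₀ < n) :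
    (1 / 2) * Δt * ∑ j ∈ Finset.Ico n₀ n,
        ‖(Δt)⁻¹ • ((w (j + 1) : E) - (w j : E))‖ ^ 2
      + ν * ‖gV (w n)‖ ^ 2 + δ * ‖gQ (y n)‖ ^ 2
      + ν * ∑ j ∈ Finset.Ico n₀ n, ‖gV (w (j + 1)) - gV (w j)‖ ^ 2
    ≤ ν * ‖gV (w n₀)‖ ^ 2 + δ * ‖gQ (y n₀)‖ ^ 2
      + 4 * Δt * ∑ j ∈ Finset.Ico n₀ n, (‖b j‖ ^ 2 + ‖gQ (d j)‖ ^ 2) := by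
  have hΔtne : Δt ≠ 0 := ne_of_gt hΔt
  -- Per-step key estimate (multiplied through by 2·Δt).
  have key2 : ∀ j : ℕ,
      ‖(w (j + 1) : E) - (w j : E)‖ ^ 2
        + 2 * Δt * ν * ‖gV (w (j + 1))‖ ^ 2 + 2 * Δt * δ * ‖gQ (y (j + 1))‖ ^ 2
        + 2 * Δt * ν * ‖gV (w (j + 1)) - gV (w j)‖ ^ 2
      ≤ 2 * Δt * ν * ‖gV (w j)‖ ^ 2 + 2 * Δt * δ * ‖gQ (y j)‖ ^ 2
        + 8 * Δt ^ 2 * (‖b j‖ ^ 2 + ‖gQ (d j)‖ ^ 2) := by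
    intro j
    have hχ := hscheme1 j (w (j + 1) - w j)
    have h2a := hscheme2 (j + 1) (y j)
    have h2b := hscheme2 j (y j)
    have h2c := hscheme2 (j + 1) (y (j + 1) - y j)
    have h2d := hscheme2 j (y (j + 1) - y j)
    simp only [Submodule.coe_sub, map_sub] at hχ h2c h2d
    set Δw : E := (w (j + 1) : E) - (w j : E) with hΔw
    set a : F := gV (w (j + 1)) with ha
    set c : F := gV (w j) with hc
    set p : E := gQ (y (j + 1)) with hp
    set q : E := gQ (y j) with hq
    -- identities
    have i1 : ⟪Δw, Δw⟫ = ‖Δw‖ ^ 2 := real_inner_self_eq_norm_sq Δw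
    have i2 : 2 * ⟪a, a - c⟫ = ‖a‖ ^ 2 - ‖c‖ ^ 2 + ‖a - c‖ ^ 2 := by
      have h1 : ‖a - c‖ ^ 2 = ‖a‖ ^ 2 - 2 * ⟪a, c⟫ + ‖c‖ ^ 2 := norm_sub_sq_real a c
      have h2 : ⟪a, a - c⟫ = ⟪a, a⟫ - ⟪a, c⟫ := inner_sub_right a a c
      have h3 : ⟪a, a⟫ = ‖a‖ ^ 2 := real_inner_self_eq_norm_sq a
      linarith
    have i3 : ⟪q, Δw⟫ = δ * ⟪p, q⟫ - δ * ‖q‖ ^ 2 := by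
      have h1 : ⟪q, Δw⟫ = ⟪Δw, q⟫ := real_inner_comm Δw q
      have h2 : ⟪Δw, q⟫ = ⟪(w (j + 1) : E), q⟫ - ⟪(w j : E), q⟫ := by
        rw [hΔw, inner_sub_left]
      have h3 : ⟪q, q⟫ = ‖q‖ ^ 2 := real_inner_self_eq_norm_sq q
      rw [h1, h2, h2a, h2b, h3]
    have i4 : 2 * ⟪p, q⟫ = ‖p‖ ^ 2 + ‖q‖ ^ 2 - ‖p - q‖ ^ 2 := by
      have h1 : ‖p - q‖ ^ 2 = ‖p‖ ^ 2 - 2 * ⟪p, q⟫ + ‖q‖ ^ 2 := norm_sub_sq_real p q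
      linarith
    have i5 : ⟪Δw, p - q⟫ = δ * ‖p - q‖ ^ 2 := by
      have h2 : ⟪Δw, p - q⟫
          = ⟪(w (j + 1) : E), p - q⟫ - ⟪(w j : E), p - q⟫ := by
        rw [hΔw, inner_sub_left]
      rw [h2, h2c, h2d, ← mul_sub, ← inner_sub_left, real_inner_self_eq_norm_sq]
    -- fact1 : Δt * δ * ‖p - q‖² ≤ ‖Δw‖²
    have fact1 : Δt * δ * ‖p - q‖ ^ 2 ≤ ‖Δw‖ ^ 2 := by
      have hcs : ⟪Δw, p - q⟫ ≤ ‖Δw‖ * ‖p - q‖ := real_inner_le_norm Δw (p - q)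
      rw [i5] at hcs
      nlinarith [sq_nonneg (‖Δw‖ - δ * ‖p - q‖), norm_nonneg (p - q), norm_nonneg Δw,
        sq_nonneg (‖p - q‖), mul_nonneg hδ.le (sq_nonneg (‖p - q‖))]
    -- Cauchy–Schwarz on the right-hand side
    have cs1 : ⟪b j, Δw⟫ ≤ ‖b j‖ * ‖Δw‖ := real_inner_le_norm (b j) Δw
    have cs2 : ⟪gQ (d j), Δw⟫ ≤ ‖gQ (d j)‖ * ‖Δw‖ := real_inner_le_norm (gQ (d j)) Δw
    -- multiply the scheme equation by Δt
    rw [i1] at hχ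
    have hcancel : Δt * (1 / Δt) = 1 := by field_simp
    have hχ2 : ‖Δw‖ ^ 2 + Δt * ν * ⟪a, a - c⟫ + Δt * ⟪q, Δw⟫
        = Δt * (⟪b j, Δw⟫ + ⟪gQ (d j), Δw⟫) := by
      linear_combination Δt * hχ - ‖Δw‖ ^ 2 * hcancel
    -- the equation in norm form
    have hE : 2 * ‖Δw‖ ^ 2 + Δt * ν * (‖a‖ ^ 2 - ‖c‖ ^ 2 + ‖a - c‖ ^ 2)
        + Δt * δ * (‖p‖ ^ 2 - ‖q‖ ^ 2) - Δt * δ * ‖p - q‖ ^ 2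
        = 2 * Δt * (⟪b j, Δw⟫ + ⟪gQ (d j), Δw⟫) := by
      linear_combination 2 * hχ2 - Δt * ν * i2 - 2 * Δt * i3 - Δt * δ * i4
    nlinarith [hE, fact1, cs1, cs2,
      sq_nonneg (‖Δw‖ - 2 * Δt * (‖b j‖ + ‖gQ (d j)‖)),
      sq_nonneg (Δt * ‖b j‖ - Δt * ‖gQ (d j)‖),
      mul_nonneg hΔt.le (norm_nonneg Δw),
      mul_nonneg (mul_nonneg hΔt.le (norm_nonneg (b j))) (norm_nonneg Δw),
      mul_nonneg (mul_nonneg hΔt.le (norm_nonneg (gQ (d j)))) (norm_nonneg Δw),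
      hΔt]
  -- telescoping by induction
  have main : ∀ m : ℕ, n₀ ≤ m →
      (∑ j ∈ Finset.Ico n₀ m, ‖(w (j + 1) : E) - (w j : E)‖ ^ 2)
        + 2 * Δt * ν * ‖gV (w m)‖ ^ 2 + 2 * Δt * δ * ‖gQ (y m)‖ ^ 2
        + 2 * Δt * ν * (∑ j ∈ Finset.Ico n₀ m, ‖gV (w (j + 1)) - gV (w j)‖ ^ 2)
      ≤ 2 * Δt * ν * ‖gV (w n₀)‖ ^ 2 + 2 * Δt * δ * ‖gQ (y n₀)‖ ^ 2
        + 8 * Δt ^ 2 * (∑ j ∈ Finset.Ico n₀ m, (‖b j‖ ^ 2 + ‖gQ (d j)‖ ^ 2)) := by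
    intro m hm
    induction m, hm using Nat.le_induction with
    | base => simp
    | succ m hm ih =>
      rw [Finset.sum_Ico_succ_top hm,
        Finset.sum_Ico_succ_top hm,
        Finset.sum_Ico_succ_top hm]
      have hk := key2 m
      linarith
  have main' := main n hn.le
  -- rewrite the smul norms
  have hS : ∑ j ∈ Finset.Ico n₀ n, ‖(Δt)⁻¹ • ((w (j + 1) : E) - (w j : E))‖ ^ 2
      = (Δt⁻¹) ^ 2 * ∑ j ∈ Finset.Ico n₀ n, ‖(w (j + 1) : E) - (w j : E)‖ ^ 2 := by
    rw [Finset.mul_sum]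
    refine Finset.sum_congr rfl fun j _ => ?_
    rw [norm_smul, Real.norm_eq_abs, abs_of_pos (inv_pos.mpr hΔt), mul_pow]
  rw [hS]
  set S1 := ∑ j ∈ Finset.Ico n₀ n, ‖(w (j + 1) : E) - (w j : E)‖ ^ 2 with hS1
  set S2 := ∑ j ∈ Finset.Ico n₀ n, ‖gV (w (j + 1)) - gV (w j)‖ ^ 2 with hS2
  set SB := ∑ j ∈ Finset.Ico n₀ n, (‖b j‖ ^ 2 + ‖gQ (d j)‖ ^ 2) with hSB
  set x1 := ‖gV (w n)‖ ^ 2 with hx1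
  set x2 := ‖gQ (y n)‖ ^ 2 with hx2
  set x3 := ‖gV (w n₀)‖ ^ 2 with hx3
  set x4 := ‖gQ (y n₀)‖ ^ 2 with hx4
  have h2Δt : (0 : ℝ) < 2 * Δt := by positivity
  calc (1 / 2) * Δt * ((Δt⁻¹) ^ 2 * S1) + ν * x1 + δ * x2 + ν * S2
      = (S1 + 2 * Δt * ν * x1 + 2 * Δt * δ * x2 + 2 * Δt * ν * S2) / (2 * Δt) := by
        field_simp
    _ ≤ (2 * Δt * ν * x3 + 2 * Δt * δ * x4 + 8 * Δt ^ 2 * SB) / (2 * Δt) := by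
        exact div_le_div_of_nonneg_right main' (by positivity)
    _ = ν * x3 + δ * x4 + 4 * Δt * SB := by
        field_simp
        ring
end

section
/- Suppose Δt ≤ δ and the sequences w, y, b, d satisfy the discrete scheme. Then for every n the following one-step H¹-type inequality holds: (Δt/2)·‖(w_{n+1} − w_n)/Δt‖² + ν·( ‖g_V w_{n+1}‖² − ‖g_V w_n‖² + ‖g_V(w_{n+1} − w_n)‖² ) + δ·( ‖g_Q y_{n+1}‖² − ‖g_Q y_n‖² ) ≤ 4·Δt·( ‖b_n‖² + ‖g_Q d_n‖² ). (This is the one-step inequality obtained from (57)–(60) in the proof of estimate (50) of Lemma 3.) -/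
open RealInnerProductSpace

set_option maxHeartbeats 800000

/-- One-step H¹-type inequality from (57)–(60) in the proof of estimate (50) of Lemma 3. -/
theorem one_step_h1_inequality
    {E F : Type*} [NormedAddCommGroup E] [InnerProductSpace ℝ E] [CompleteSpace E]
    [NormedAddCommGroup F] [InnerProductSpace ℝ F] [CompleteSpace F]
    (V : Submodule ℝ E) {Q : Type*} [AddCommGroup Q] [Module ℝ Q]
    (gV : V →ₗ[ℝ] F) (gQ : Q →ₗ[ℝ] E)
    (ν δ Δt : ℝ) (hν : 0 < ν) (hδ : 0 < δ) (hΔt : 0 < Δt) (hΔtδ : Δt ≤ δ)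
    (w : ℕ → V) (y : ℕ → Q) (b : ℕ → E) (d : ℕ → Q)
    (hscheme1 : ∀ n, ∀ χ : V,
      (1 / Δt) * ⟪(w (n + 1) : E) - (w n : E), (χ : E)⟫
        + ν * ⟪gV (w (n + 1)), gV χ⟫ + ⟪gQ (y n), (χ : E)⟫
      = ⟪b n, (χ : E)⟫ + ⟪gQ (d n), (χ : E)⟫)
    (hscheme2 : ∀ n, ∀ ψ : Q, ⟪(w n : E), gQ ψ⟫ = δ * ⟪gQ (y n), gQ ψ⟫)
    (n : ℕ) :
    (Δt / 2) * ‖(Δt)⁻¹ • ((w (n + 1) : E) - (w n : E))‖ ^ 2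
      + ν * (‖gV (w (n + 1))‖ ^ 2 - ‖gV (w n)‖ ^ 2
              + ‖gV (w (n + 1)) - gV (w n)‖ ^ 2)
      + δ * (‖gQ (y (n + 1))‖ ^ 2 - ‖gQ (y n)‖ ^ 2)
    ≤ 4 * Δt * (‖b n‖ ^ 2 + ‖gQ (d n)‖ ^ 2) := by
  set a : E := (w (n+1) : E) with ha
  set c : E := (w n : E) with hc
  set e : E := a - c with he
  set u : F := gV (w (n+1)) with hu
  set v : F := gV (w n) with hv
  set p : E := gQ (y n) with hp
  set q : E := gQ (y (n+1)) with hq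
  set B : E := b n with hB
  set D : E := gQ (d n) with hD
  -- scheme1 with test function χ = w(n+1) - w n
  have h1 := hscheme1 n (w (n+1) - w n)
  have hcoe : ((w (n+1) - w n : V) : E) = e := by simp [he, ha, hc]
  rw [hcoe, map_sub] at h1
  -- h1 : (1/Δt)*⟪e,e⟫ + ν*⟪u, u - v⟫ + ⟪p, e⟫ = ⟪B, e⟫ + ⟪D, e⟫
  have h2a := hscheme2 (n+1) (y n)
  have h2b := hscheme2 n (y n)
  have h2c := hscheme2 (n+1) (y (n+1))
  have h2d := hscheme2 n (y (n+1))
  -- norm identities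
  have nuv : ‖u - v‖^2 = ‖u‖^2 - 2*⟪u,v⟫ + ‖v‖^2 := norm_sub_sq_real u v
  have nqp : ‖q - p‖^2 = ‖q‖^2 - 2*⟪q,p⟫ + ‖p‖^2 := norm_sub_sq_real q p
  have iee : ⟪e,e⟫ = ‖e‖^2 := real_inner_self_eq_norm_sq e
  have ipp : ⟪p,p⟫ = ‖p‖^2 := real_inner_self_eq_norm_sq p
  have iqq : ⟪q,q⟫ = ‖q‖^2 := real_inner_self_eq_norm_sq q
  have iuu : ⟪u,u⟫ = ‖u‖^2 := real_inner_self_eq_norm_sq u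
  have huv : ⟪u, u - v⟫ = ‖u‖^2 - ⟪u,v⟫ := by rw [inner_sub_right, iuu]
  -- rewrite pressure term: ⟪p, e⟫ = δ⟪q,p⟫ - δ‖p‖²
  have hpe : ⟪p, e⟫ = δ*⟪q,p⟫ - δ*‖p‖^2 := by
    rw [real_inner_comm, he, inner_sub_left, h2a, h2b, ipp, real_inner_comm p q]
  -- ⟪e, q - p⟫ = δ‖q-p‖²
  have heqp : ⟪e, q - p⟫ = δ*‖q - p‖^2 := by
    have := real_inner_self_eq_norm_sq (q - p)
    rw [he, inner_sub_left, inner_sub_right, inner_sub_right, h2a, h2b, h2c, h2d,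
      ← this]
    rw [inner_sub_left, inner_sub_right, inner_sub_right]
    ring
  -- Cauchy-Schwarz bounds
  have cs1 : ⟪e, q - p⟫ ≤ ‖e‖ * ‖q - p‖ := real_inner_le_norm e (q - p)
  have csB : ⟪B, e⟫ ≤ ‖B‖ * ‖e‖ := real_inner_le_norm B e
  have csD : ⟪D, e⟫ ≤ ‖D‖ * ‖e‖ := real_inner_le_norm D e
  -- δ‖q-p‖² ≤ ‖e‖²/δ, i.e. δ²‖q-p‖² ≤ ‖e‖²
  have key : δ^2 * ‖q - p‖^2 ≤ ‖e‖^2 := by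
    have h := heqp ▸ cs1
    nlinarith [sq_nonneg (δ*‖q-p‖ - ‖e‖), norm_nonneg (q-p), norm_nonneg e]
  -- goal norm rewrite
  have hsm : ‖(Δt)⁻¹ • e‖^2 = (Δt)⁻¹^2 * ‖e‖^2 := by
    rw [norm_smul, mul_pow, Real.norm_eq_abs, abs_of_pos (inv_pos.mpr hΔt)]
  rw [hsm]
  -- multiply h1 by Δt to clear denominators
  have h1' : ‖e‖^2 + Δt*ν*(‖u‖^2 - ⟪u,v⟫) + Δt*(δ*⟪q,p⟫ - δ*‖p‖^2)
      = Δt*⟪B, e⟫ + Δt*⟪D, e⟫ := by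
    have h := h1
    rw [iee, huv, hpe] at h
    have hne : Δt ≠ 0 := ne_of_gt hΔt
    field_simp at h
    linarith [h]
  have hδe : δ*‖q - p‖^2 ≤ ‖e‖^2 / Δt := by
    rw [div_eq_inv_mul, ← mul_le_mul_iff_right₀ hδ]
    
    calc δ * (δ * ‖q-p‖^2) = δ^2 * ‖q-p‖^2 := by ring
    _ ≤ ‖e‖^2 := key
    _ = 1 * ‖e‖^2 := (one_mul _).symm
    _ ≤ (δ * Δt⁻¹) * ‖e‖^2 := by
        apply mul_le_mul_of_nonneg_right _ (sq_nonneg _)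
        rw [← div_eq_mul_inv, le_div_iff₀ hΔt]; linarith
    _ = δ * (Δt⁻¹ * ‖e‖^2) := by ring
  -- Young: 2(‖B‖+‖D‖)‖e‖ ≤ 2Δt(‖B‖+‖D‖)² + ‖e‖²/(2Δt)
  have young : 2*(‖B‖+‖D‖)*‖e‖ ≤ 2*Δt*(‖B‖+‖D‖)^2 + ‖e‖^2/(2*Δt) := by
    have h2 : (0:ℝ) < 2*Δt := by linarith
    have key2 : 2*(‖B‖+‖D‖)*‖e‖ - 2*Δt*(‖B‖+‖D‖)^2 ≤ ‖e‖^2/(2*Δt) := by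
      rw [le_div_iff₀ h2]
      nlinarith [sq_nonneg (2*Δt*(‖B‖+‖D‖) - ‖e‖)]
    linarith
  -- final assembly
  have hNB : (‖B‖+‖D‖)^2 ≤ 2*(‖B‖^2 + ‖D‖^2) := by nlinarith [sq_nonneg (‖B‖ - ‖D‖)]
  -- From h1' (×2/Δt conceptually): work at scaled level.
  -- 2‖e‖² + Δt ν (‖u‖²-‖v‖²+‖u-v‖²) + Δt δ (‖q‖²-‖p‖²) - Δt δ‖q-p‖² = 2Δt⟪B,e⟫+2Δt⟪D,e⟫
  have main : 2*‖e‖^2 + Δt*ν*(‖u‖^2 - ‖v‖^2 + ‖u-v‖^2) + Δt*δ*(‖q‖^2 - ‖p‖^2)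
      - Δt*(δ*‖q-p‖^2) = 2*Δt*⟪B,e⟫ + 2*Δt*⟪D,e⟫ := by
    linear_combination 2*h1' + (Δt*ν)*nuv - (Δt*δ)*nqp
  have hq2 : Δt*(δ*‖q-p‖^2) ≤ ‖e‖^2 := by
    have := mul_le_mul_of_nonneg_left hδe (le_of_lt hΔt)
    calc Δt*(δ*‖q-p‖^2) ≤ Δt * (‖e‖^2/Δt) := this
    _ = ‖e‖^2 := by field_simp
  have hBe : 2*Δt*⟪B,e⟫ + 2*Δt*⟪D,e⟫ ≤ Δt*(2*(‖B‖+‖D‖)*‖e‖) := by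
    have g1 := mul_le_mul_of_nonneg_left csB (by positivity : (0:ℝ) ≤ 2*Δt)
    have g2 := mul_le_mul_of_nonneg_left csD (by positivity : (0:ℝ) ≤ 2*Δt)
    have : Δt*(2*(‖B‖+‖D‖)*‖e‖) = 2*Δt*(‖B‖*‖e‖) + 2*Δt*(‖D‖*‖e‖) := by ring
    linarith [g1, g2]
  -- So: ‖e‖² + ΔtνA + ΔtδB' ≤ Δt·(2X‖e‖) and 2X‖e‖ ≤ 2ΔtX² + ‖e‖²/(2Δt)
  have step : ‖e‖^2 + Δt*ν*(‖u‖^2 - ‖v‖^2 + ‖u-v‖^2) + Δt*δ*(‖q‖^2 - ‖p‖^2)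
      ≤ Δt*(2*Δt*(‖B‖+‖D‖)^2) + Δt*(‖e‖^2/(2*Δt)) := by
    have hy := mul_le_mul_of_nonneg_left young (le_of_lt hΔt)
    rw [mul_add] at hy
    linarith [main, hq2, hBe, hy]
  have hehalf : Δt*(‖e‖^2/(2*Δt)) = ‖e‖^2/2 := by field_simp
  rw [hehalf] at step
  -- step: ‖e‖² + ΔtνA + ΔtδB' ≤ 2Δt²X² + ‖e‖²/2
  -- divide by Δt; goal: (Δt/2)·Δt⁻²‖e‖² + νA + δB' ≤ 4Δt(‖B‖²+‖D‖²)
  have hgoal : (Δt/2)*((Δt)⁻¹^2*‖e‖^2) = ‖e‖^2/(2*Δt) := by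
    field_simp
  rw [hgoal]
  have hX : Δt*(2*Δt*(‖B‖+‖D‖)^2) ≤ Δt*(4*Δt*(‖B‖^2+‖D‖^2)) := by
    have h := mul_le_mul_of_nonneg_left hNB (by positivity : (0:ℝ) ≤ Δt^2)
    have e1 : Δt*(2*Δt*(‖B‖+‖D‖)^2) = 2*(Δt^2*(‖B‖+‖D‖)^2) := by ring
    have e2 : Δt*(4*Δt*(‖B‖^2+‖D‖^2)) = 2*(Δt^2*(2*(‖B‖^2+‖D‖^2))) := by ring
    linarith [h]
  -- from step: ‖e‖²/2 + ΔtνA + ΔtδB' ≤ 4Δt²(‖B‖²+‖D‖²)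
  -- divide by Δt
  have final' : Δt*(‖e‖^2/(2*Δt)) + Δt*(ν*(‖u‖^2 - ‖v‖^2 + ‖u-v‖^2))
      + Δt*(δ*(‖q‖^2 - ‖p‖^2)) ≤ Δt*(4*Δt*(‖B‖^2+‖D‖^2)) := by
    rw [hehalf]
    have e1 : Δt*(ν*(‖u‖^2 - ‖v‖^2 + ‖u-v‖^2)) = Δt*ν*(‖u‖^2 - ‖v‖^2 + ‖u-v‖^2) := by ring
    have e2 : Δt*(δ*(‖q‖^2 - ‖p‖^2)) = Δt*δ*(‖q‖^2 - ‖p‖^2) := by ring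
    linarith [step, hX]
  have final'' : Δt*(‖e‖^2/(2*Δt) + ν*(‖u‖^2 - ‖v‖^2 + ‖u-v‖^2) + δ*(‖q‖^2 - ‖p‖^2))
      ≤ Δt*(4*Δt*(‖B‖^2+‖D‖^2)) := by
    rw [mul_add, mul_add]; exact final'
  exact (mul_le_mul_iff_right₀ hΔt).mp final''
end

section
/- Suppose the sequences w, y, b, d satisfy the discrete scheme and write t_j = j·Δt. Define W_n := t_n · w_n ∈ V, Y_n := t_n · y_n ∈ Q, B_n := t_{n+1} · b_n + w_n ∈ E and D_n := t_{n+1} · d_n − Δt · y_n ∈ Q. Then the sequences W, Y, B, D also satisfy the discrete scheme (with the same ν, δ, Δt): for every n, (1/Δt)⟨W_{n+1} − W_n, χ⟩ + ν⟨g_V W_{n+1}, g_V χ⟩ + ⟨g_Q Y_n, χ⟩ = ⟨B_n, χ⟩ + ⟨g_Q D_n, χ⟩ for all χ ∈ V, and ⟨W_n, g_Q ψ⟩ = δ⟨g_Q Y_n, g_Q ψ⟩ for all ψ ∈ Q. (This is the time-weighting transformation used in the proof of Lemma 5.) -/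
open RealInnerProductSpace

/-- The time-weighting transformation used in the proof of Lemma 5: if
`(w, y, b, d)` satisfies the discrete scheme, then so does
`(W, Y, B, D)` with `Wₙ = tₙ • wₙ`, `Yₙ = tₙ • yₙ`, `Bₙ = tₙ₊₁ • bₙ + wₙ`,
`Dₙ = tₙ₊₁ • dₙ − Δt • yₙ`, where `tⱼ = j·Δt`. -/
theorem time_weighting_transformation
    {E F : Type*} [NormedAddCommGroup E] [InnerProductSpace ℝ E] [CompleteSpace E]
    [NormedAddCommGroup F] [InnerProductSpace ℝ F] [CompleteSpace F]
    (V : Submodule ℝ E) {Q : Type*} [AddCommGroup Q] [Module ℝ Q]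
    (gV : V →ₗ[ℝ] F) (gQ : Q →ₗ[ℝ] E)
    (ν δ Δt : ℝ) (hν : 0 < ν) (hδ : 0 < δ) (hΔt : 0 < Δt)
    (w : ℕ → V) (y : ℕ → Q) (b : ℕ → E) (d : ℕ → Q)
    (hscheme1 : ∀ n, ∀ χ : V,
      (1 / Δt) * ⟪(w (n + 1) : E) - (w n : E), (χ : E)⟫
        + ν * ⟪gV (w (n + 1)), gV χ⟫ + ⟪gQ (y n), (χ : E)⟫
      = ⟪b n, (χ : E)⟫ + ⟪gQ (d n), (χ : E)⟫)
    (hscheme2 : ∀ n, ∀ ψ : Q, ⟪(w n : E), gQ ψ⟫ = δ * ⟪gQ (y n), gQ ψ⟫)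
    (W : ℕ → V) (Y : ℕ → Q) (B : ℕ → E) (D : ℕ → Q)
    (hW : ∀ n, W n = ((n : ℝ) * Δt) • w n)
    (hY : ∀ n, Y n = ((n : ℝ) * Δt) • y n)
    (hB : ∀ n, B n = (((n : ℝ) + 1) * Δt) • b n + (w n : E))
    (hD : ∀ n, D n = (((n : ℝ) + 1) * Δt) • d n - Δt • y n) :
    (∀ n, ∀ χ : V,
      (1 / Δt) * ⟪(W (n + 1) : E) - (W n : E), (χ : E)⟫
        + ν * ⟪gV (W (n + 1)), gV χ⟫ + ⟪gQ (Y n), (χ : E)⟫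
      = ⟪B n, (χ : E)⟫ + ⟪gQ (D n), (χ : E)⟫)
    ∧ (∀ n, ∀ ψ : Q, ⟪(W n : E), gQ ψ⟫ = δ * ⟪gQ (Y n), gQ ψ⟫) := by
  constructor
  · intro n χ
    simp only [hW, hY, hB, hD, map_smul, map_sub, Submodule.coe_smul,
      real_inner_smul_left, inner_sub_left, inner_add_left, Nat.cast_add, Nat.cast_one]
    have h1 := hscheme1 n χ
    simp only [inner_sub_left] at h1
    field_simp at h1 ⊢
    linear_combination ((n : ℝ) + 1) * h1
  · intro n ψ
    simp only [hW, hY, map_smul, Submodule.coe_smul, real_inner_smul_left]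
    rw [hscheme2 n ψ]
    ring
end

section
/- Let ν > 0, δ > 0, c ≥ 0, e ∈ V, r ∈ Q, T₁ ∈ G and T₂ ∈ E. Assume: (a) ν⟨g_V e, g_V χ⟩ + ⟨g_Q r, χ⟩ = ⟨T₁, div_V χ⟩ for all χ ∈ V; (b) ⟨div_V e, ψ⟩ = −δ⟨g_Q r, g_Q ψ⟩ − δ⟨T₂, g_Q ψ⟩ for all ψ ∈ Q; and (c) ‖div_V χ‖ ≤ c‖g_V χ‖ for all χ ∈ V. Then ν‖g_V e‖² + δ‖g_Q r‖² ≤ (c²/ν)‖T₁‖² + δ‖T₂‖². (This is the energy estimate for the error equations (13) of the stabilized Stokes projection, yielding inequality (15).) -/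
open RealInnerProductSpace

/-- Energy estimate for the error equations (13) of the stabilized Stokes
projection, yielding inequality (15). -/
theorem stabilized_stokes_energy_estimate
    {E F G : Type*} [NormedAddCommGroup E] [InnerProductSpace ℝ E] [CompleteSpace E]
    [NormedAddCommGroup F] [InnerProductSpace ℝ F] [CompleteSpace F]
    [NormedAddCommGroup G] [InnerProductSpace ℝ G] [CompleteSpace G]
    (V : Submodule ℝ E) (Q : Submodule ℝ G)
    (gV : V →ₗ[ℝ] F) (gQ : Q →ₗ[ℝ] E) (divV : V →ₗ[ℝ] G)
    (hIBP : ∀ (ψ : Q) (χ : V), ⟪gQ ψ, (χ : E)⟫ = -⟪(ψ : G), divV χ⟫)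
    (ν δ c : ℝ) (hν : 0 < ν) (hδ : 0 < δ) (hc : 0 ≤ c)
    (e : V) (r : Q) (T₁ : G) (T₂ : E)
    (ha : ∀ χ : V, ν * ⟪gV e, gV χ⟫ + ⟪gQ r, (χ : E)⟫ = ⟪T₁, divV χ⟫)
    (hb : ∀ ψ : Q, ⟪divV e, (ψ : G)⟫ = -(δ * ⟪gQ r, gQ ψ⟫) - δ * ⟪T₂, gQ ψ⟫)
    (hc' : ∀ χ : V, ‖divV χ‖ ≤ c * ‖gV χ‖) :
    ν * ‖gV e‖ ^ 2 + δ * ‖gQ r‖ ^ 2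
      ≤ (c ^ 2 / ν) * ‖T₁‖ ^ 2 + δ * ‖T₂‖ ^ 2 := by
  have h1 := ha e
  have h2 := hb r
  have h3 := hIBP r e
  have hcomm : ⟪(r : G), divV e⟫ = ⟪divV e, (r : G)⟫ := real_inner_comm _ _
  have hAA : ⟪gV e, gV e⟫ = ‖gV e‖ ^ 2 := real_inner_self_eq_norm_sq _
  have hBB : ⟪gQ r, gQ r⟫ = ‖gQ r‖ ^ 2 := real_inner_self_eq_norm_sq _
  -- energy identity
  have key : ν * ‖gV e‖ ^ 2 + δ * ‖gQ r‖ ^ 2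
      = ⟪T₁, divV e⟫ - δ * ⟪T₂, gQ r⟫ := by
    have := h1
    rw [h3, hcomm, h2, hAA, hBB] at this
    linarith
  have hb1 : ⟪T₁, divV e⟫ ≤ ‖T₁‖ * (c * ‖gV e‖) := by
    calc ⟪T₁, divV e⟫ ≤ ‖T₁‖ * ‖divV e‖ := real_inner_le_norm _ _
      _ ≤ ‖T₁‖ * (c * ‖gV e‖) := by
          exact mul_le_mul_of_nonneg_left (hc' e) (norm_nonneg _)
  have hb2 : -⟪T₂, gQ r⟫ ≤ ‖T₂‖ * ‖gQ r‖ := by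
    have := real_inner_le_norm (-T₂) (gQ r)
    simpa using this
  have hn1 : (0:ℝ) ≤ ‖T₁‖ := norm_nonneg _
  have hn2 : (0:ℝ) ≤ ‖gV e‖ := norm_nonneg _
  have H : ν * (ν * ‖gV e‖ ^ 2 + δ * ‖gQ r‖ ^ 2)
      ≤ c ^ 2 * ‖T₁‖ ^ 2 + ν * (δ * ‖T₂‖ ^ 2) := by
    have keyν : ν * (ν * ‖gV e‖ ^ 2 + δ * ‖gQ r‖ ^ 2)
        = ν * ⟪T₁, divV e⟫ - ν * (δ * ⟪T₂, gQ r⟫) := by rw [key]; ring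
    have P1 : ν * ⟪T₁, divV e⟫ ≤ ν * (‖T₁‖ * (c * ‖gV e‖)) :=
      mul_le_mul_of_nonneg_left hb1 (le_of_lt hν)
    have P2 : ν * (δ * -⟪T₂, gQ r⟫) ≤ ν * (δ * (‖T₂‖ * ‖gQ r‖)) :=
      mul_le_mul_of_nonneg_left (mul_le_mul_of_nonneg_left hb2 (le_of_lt hδ))
        (le_of_lt hν)
    nlinarith [sq_nonneg (c * ‖T₁‖ - ν * ‖gV e‖),
      mul_nonneg (mul_nonneg (le_of_lt hν) (le_of_lt hδ))
        (sq_nonneg (‖T₂‖ - ‖gQ r‖))]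
  rw [← le_div_iff₀' hν] at H
  have heq : (c ^ 2 * ‖T₁‖ ^ 2 + ν * (δ * ‖T₂‖ ^ 2)) / ν
      = c ^ 2 / ν * ‖T₁‖ ^ 2 + δ * ‖T₂‖ ^ 2 := by
    field_simp
  linarith
end

section
/- Let H be a real Hilbert space, let p : ℝ → H be continuously differentiable, let q : ℕ → H be a sequence, let Δt > 0 and n ≥ 1, and set t_j = j·Δt. Then (1/2) · Σ_{j=1}^{n} Δt · ‖q_j − p(t_j)‖² ≤ Σ_{j=1}^{n} Δt · ‖2q_j − q_{j−1} − p(t_j)‖² + (Δt/2) · ‖q_0 − p(0)‖² + Δt² · ∫_0^{t_n} ‖p'(t)‖² dt. (This is the averaging inequality relating the incremental-scheme pressures q_h^n to the extrapolated pressures q̂_h^n = 2q_h^n − q_h^{n−1}, used in the proof of Theorem 3.) -/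
theorem key_aux {H : Type*} [NormedAddCommGroup H] [InnerProductSpace ℝ H]
    (e f d : H) : ‖e‖^2 ≤ ‖(2:ℝ)•e - f + d‖^2 + (1/2)*‖f‖^2 + ‖d‖^2 := by
  have key : ‖(2:ℝ)•e - f + d‖^2 + (1/2)*‖f‖^2 + ‖d‖^2 - ‖e‖^2
      = (1/3)*‖(3:ℝ)•e - (2:ℝ)•f + (2:ℝ)•d‖^2 + (1/6)*‖f + (2:ℝ)•d‖^2 := by
    simp only [← real_inner_self_eq_norm_sq, inner_add_left, inner_add_right,
      inner_sub_left, inner_sub_right, real_inner_smul_left, real_inner_smul_right,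
      real_inner_comm f e, real_inner_comm d e, real_inner_comm d f]
    ring
  nlinarith [sq_nonneg ‖(3:ℝ)•e - (2:ℝ)•f + (2:ℝ)•d‖, sq_nonneg ‖f + (2:ℝ)•d‖]

theorem cs_aux {H : Type*} [NormedAddCommGroup H] [InnerProductSpace ℝ H] [CompleteSpace H]
    (p : ℝ → H) (hp : ContDiff ℝ 1 p) {a b : ℝ} (hab : a ≤ b) :
    ‖p b - p a‖^2 ≤ (b - a) * ∫ t in a..b, ‖deriv p t‖^2 := by
  have hc : Continuous (deriv p) := hp.continuous_deriv le_rfl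
  have hg : IntervalIntegrable (fun t => ‖deriv p t‖) MeasureTheory.volume a b :=
    (hc.norm).intervalIntegrable a b
  have hg2 : IntervalIntegrable (fun t => ‖deriv p t‖^2) MeasureTheory.volume a b :=
    ((hc.norm).pow 2).intervalIntegrable a b
  have ftc : ∫ t in a..b, deriv p t = p b - p a :=
    intervalIntegral.integral_deriv_eq_sub
      (fun t _ => (hp.differentiable one_ne_zero).differentiableAt)
      (hc.intervalIntegrable a b)
  have h1 : ‖p b - p a‖ ≤ ∫ t in a..b, ‖deriv p t‖ := by
    rw [← ftc]
    exact intervalIntegral.norm_integral_le_integral_norm hab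
  set I : ℝ := ∫ t in a..b, ‖deriv p t‖ with hI
  set J : ℝ := ∫ t in a..b, ‖deriv p t‖^2 with hJ
  have hInn : 0 ≤ I := intervalIntegral.integral_nonneg hab (fun t _ => norm_nonneg _)
  have hJnn : 0 ≤ J := intervalIntegral.integral_nonneg hab (fun t _ => sq_nonneg _)
  set L : ℝ := b - a with hL
  have hLnn : 0 ≤ L := by simp [hL]; linarith
  have hCS : I^2 ≤ L * J := by
    have h0 : 0 ≤ ∫ t in a..b, (L*‖deriv p t‖ - I)^2 :=
      intervalIntegral.integral_nonneg hab (fun t _ => sq_nonneg _)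
    have hexp : ∫ t in a..b, (L*‖deriv p t‖ - I)^2
        = L^2*J - (2*L*I)*I + I^2*L := by
      have heq : ∀ t : ℝ, (L*‖deriv p t‖ - I)^2
          = L^2*‖deriv p t‖^2 - (2*L*I)*‖deriv p t‖ + I^2 := by intro t; ring
      simp_rw [heq]
      rw [intervalIntegral.integral_add ((hg2.const_mul _).sub (hg.const_mul _))
            intervalIntegrable_const,
          intervalIntegral.integral_sub (hg2.const_mul _) (hg.const_mul _),
          intervalIntegral.integral_const_mul, intervalIntegral.integral_const_mul,
          intervalIntegral.integral_const]
      simp only [smul_eq_mul, ← hI, ← hJ, ← hL]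
      ring
    rw [hexp] at h0
    rcases eq_or_lt_of_le hLnn with h | hL0
    · have hab' : a = b := by simp [hL] at h; linarith
      rw [← h, zero_mul]
      have : I = 0 := by simp [hI, hab']
      simp [this]
    · nlinarith
  calc ‖p b - p a‖^2 ≤ I^2 := by nlinarith [norm_nonneg (p b - p a)]
    _ ≤ L * J := hCS

/-- Averaging inequality relating the incremental-scheme pressures to the
extrapolated pressures `q̂ⱼ = 2qⱼ − qⱼ₋₁`, used in the proof of Theorem 3. -/
theorem extrapolated_pressure_averaging_inequality
    {H : Type*} [NormedAddCommGroup H] [InnerProductSpace ℝ H] [CompleteSpace H]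
    (p : ℝ → H) (hp : ContDiff ℝ 1 p) (q : ℕ → H)
    (Δt : ℝ) (hΔt : 0 < Δt) (n : ℕ) (hn : 1 ≤ n) :
    (1 / 2) * ∑ j ∈ Finset.Icc 1 n, Δt * ‖q j - p ((j : ℝ) * Δt)‖ ^ 2
      ≤ ∑ j ∈ Finset.Icc 1 n,
            Δt * ‖(2 : ℝ) • q j - q (j - 1) - p ((j : ℝ) * Δt)‖ ^ 2
        + (Δt / 2) * ‖q 0 - p 0‖ ^ 2
        + Δt ^ 2 * ∫ t in (0 : ℝ)..((n : ℝ) * Δt), ‖deriv p t‖ ^ 2 := by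
  have hc : Continuous (deriv p) := hp.continuous_deriv le_rfl
  have hIcc : ∀ f : ℕ → ℝ, ∑ j ∈ Finset.Icc 1 n, f j = ∑ i ∈ Finset.range n, f (i+1) := by
    intro f
    have h : Finset.Icc 1 n
        = Finset.map ⟨fun i => i+1, add_left_injective 1⟩ (Finset.range n) := by
      ext j
      simp only [Finset.mem_Icc, Finset.mem_map, Finset.mem_range,
        Function.Embedding.coeFn_mk]
      constructor
      · rintro ⟨h1, h2⟩; exact ⟨j-1, by omega, by omega⟩
      · rintro ⟨a, ha, rfl⟩; omega
    rw [h, Finset.sum_map]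
    simp only [Function.Embedding.coeFn_mk]
  rw [hIcc, hIcc]
  -- per-term bound
  have hterm : ∀ i : ℕ,
      Δt * ‖q (i+1) - p ((↑(i+1) : ℝ) * Δt)‖ ^ 2
        ≤ Δt * ‖(2:ℝ) • q (i+1) - q (i+1-1) - p ((↑(i+1) : ℝ) * Δt)‖ ^ 2
          + (Δt/2) * ‖q i - p ((i:ℝ) * Δt)‖ ^ 2
          + Δt^2 * ∫ t in ((i:ℝ)*Δt)..((↑(i+1):ℝ)*Δt), ‖deriv p t‖^2 := by
    intro i
    have hle : (i:ℝ)*Δt ≤ (↑(i+1):ℝ)*Δt := by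
      push_cast
      nlinarith [hΔt, (Nat.cast_nonneg i : (0:ℝ) ≤ i)]
    have hD := cs_aux p hp hle
    have hDt : ((↑(i+1):ℝ)*Δt - (i:ℝ)*Δt) = Δt := by push_cast; ring
    rw [hDt] at hD
    have hX : (2:ℝ) • q (i+1) - q (i+1-1) - p ((↑(i+1) : ℝ) * Δt)
        = (2:ℝ) • (q (i+1) - p ((↑(i+1) : ℝ) * Δt))
          - (q i - p ((i:ℝ) * Δt))
          + (p ((↑(i+1):ℝ)*Δt) - p ((i:ℝ)*Δt)) := by
      simp only [Nat.add_sub_cancel]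
      module
    rw [hX]
    have hkey := key_aux (q (i+1) - p ((↑(i+1) : ℝ) * Δt)) (q i - p ((i:ℝ) * Δt))
      (p ((↑(i+1):ℝ)*Δt) - p ((i:ℝ)*Δt))
    nlinarith [hkey, hD, hΔt]
  have hsum := Finset.sum_le_sum (fun i (_ : i ∈ Finset.range n) => hterm i)
  rw [Finset.sum_add_distrib, Finset.sum_add_distrib] at hsum
  -- middle sum bound
  have hB : ∑ i ∈ Finset.range n, (Δt/2) * ‖q i - p ((i:ℝ) * Δt)‖ ^ 2
      ≤ (Δt/2) * ‖q 0 - p 0‖ ^ 2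
        + (1/2) * ∑ i ∈ Finset.range n, Δt * ‖q (i+1) - p ((↑(i+1):ℝ) * Δt)‖ ^ 2 := by
    obtain ⟨m, rfl⟩ : ∃ m, n = m + 1 := ⟨n-1, (Nat.succ_pred_eq_of_pos hn).symm⟩
    rw [Finset.sum_range_succ']
    have h0 : (Δt/2) * ‖q 0 - p (((0:ℕ):ℝ) * Δt)‖ ^ 2 = (Δt/2) * ‖q 0 - p 0‖ ^ 2 := by
      norm_num
    rw [h0]
    rw [Finset.mul_sum]
    have : ∑ i ∈ Finset.range m, (Δt/2) * ‖q (i+1) - p ((↑(i+1):ℝ) * Δt)‖ ^ 2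
        ≤ ∑ i ∈ Finset.range (m+1), (1/2) * (Δt * ‖q (i+1) - p ((↑(i+1):ℝ) * Δt)‖ ^ 2) := by
      refine le_trans (le_of_eq ?_)
        (Finset.sum_le_sum_of_subset_of_nonneg
          (Finset.range_subset_range.mpr (Nat.le_succ m))
          (fun i _ _ => by positivity))
      refine Finset.sum_congr rfl (fun i _ => by ring)
    linarith
  -- integral sum
  have hC : ∑ i ∈ Finset.range n, Δt^2 * ∫ t in ((i:ℝ)*Δt)..((↑(i+1):ℝ)*Δt), ‖deriv p t‖^2
      = Δt ^ 2 * ∫ t in (0:ℝ)..((n:ℝ)*Δt), ‖deriv p t‖^2 := by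
    rw [← Finset.mul_sum]
    congr 1
    have := intervalIntegral.sum_integral_adjacent_intervals
      (a := fun k : ℕ => (k:ℝ)*Δt) (μ := MeasureTheory.volume)
      (f := fun t => ‖deriv p t‖^2) (n := n)
      (fun k _ => ((hc.norm.pow 2)).intervalIntegrable _ _)
    simpa using this
  rw [hC] at hsum
  linarith
end
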